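/- Let E be a finite-dimensional real normed vector space, let Ω ⊆ E be nonempty with Ω ≠ E, and let φ_Ω be the signed distance function of Ω. If x ∉ ∂Ω and φ_Ω is differentiable at x, then the derivative Dφ_Ω(x) has operator norm exactly 1. -/

import Mathlib

open Metric Classical

/-- The signed distance function of a set `Ω`: the distance to the frontier of `Ω`,
taken positive inside `Ω` and negative outside. -/
noncomputable def signedDistFrontier {E : Type*} [NormedAddCommGroup E] [NormedSpace ℝ E]
    (Ω : Set E) (p : E) : ℝ :=
  if p ∈ Ω then infDist p (frontier Ω) else -infDist p (frontier Ω)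

/-- The distance function to a nonempty closed set has derivative of norm one at every
point of differentiability outside the set. -/
theorem norm_fderiv_infDist_eq_one {E : Type*} [NormedAddCommGroup E] [NormedSpace ℝ E]
    [FiniteDimensional ℝ E] (F : Set E) (hF : IsClosed F) (hFne : F.Nonempty)
    (x : E) (hx : x ∉ F) (hdiff : DifferentiableAt ℝ (fun p => infDist p F) x) :
    ‖fderiv ℝ (fun p => infDist p F) x‖ = 1 := by
  set g : E → ℝ := fun p => infDist p F with hg
  set L := fderiv ℝ g x with hL
  have hd : 0 < infDist x F := (hF.notMem_iff_infDist_pos hFne).1 hx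
  set d := infDist x F with hdd
  -- upper bound
  have hle : ‖L‖ ≤ 1 := by
    have := norm_fderiv_le_of_lipschitz ℝ (lipschitz_infDist_pt F) (x₀ := x)
    simpa using this
  -- lower bound
  obtain ⟨y, hyF, hxy⟩ := hF.exists_infDist_eq_dist hFne x
  have hyx : ‖y - x‖ = d := by
    rw [norm_sub_rev, ← dist_eq_norm, ← hxy]
  set v : E := d⁻¹ • (y - x) with hv
  have hvnorm : ‖v‖ = 1 := by
    rw [hv, norm_smul, hyx, norm_inv, Real.norm_of_nonneg hd.le]
    field_simp
  -- h t = g (x + t • v)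
  have hline : HasDerivAt (fun t : ℝ => x + t • v) v 0 := by
    simpa using ((hasDerivAt_id (0:ℝ)).smul_const v).const_add x
  have hfd0 : HasFDerivAt g L (x + (0:ℝ) • v) := by simpa using hdiff.hasFDerivAt
  have hcomp : HasDerivAt (fun t : ℝ => g (x + t • v)) (L v) 0 :=
    hfd0.comp_hasDerivAt (f := fun t : ℝ => x + t • v) 0 hline
  have heq : ∀ t ∈ Set.Icc (0:ℝ) d, g (x + t • v) = d - t := by
    intro t ht
    have hxtv : x + t • v - y = (t / d - 1) • (y - x) := by
      rw [hv, smul_smul, div_eq_mul_inv]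
      module
    have hub : g (x + t • v) ≤ d - t := by
      have h1 : g (x + t • v) ≤ dist (x + t • v) y := infDist_le_dist_of_mem hyF
      have h2 : dist (x + t • v) y = d - t := by
        rw [dist_eq_norm, hxtv, norm_smul, hyx, Real.norm_eq_abs,
          abs_of_nonpos (by rw [sub_nonpos]; exact (div_le_one hd).2 ht.2)]
        field_simp
        ring
      linarith
    have hlb : d - t ≤ g (x + t • v) := by
      have h1 : infDist x F ≤ infDist (x + t • v) F + dist x (x + t • v) :=
        infDist_le_infDist_add_dist
      have h2 : dist x (x + t • v) = t := by
        rw [dist_eq_norm]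
        simp [norm_smul, hvnorm, abs_of_nonneg ht.1]
      rw [h2] at h1
      simp only [hg] at *
      linarith
    linarith
  have hud : UniqueDiffWithinAt ℝ (Set.Icc (0:ℝ) d) 0 :=
    (uniqueDiffOn_Icc hd) 0 ⟨le_refl _, hd.le⟩
  have h1 : HasDerivWithinAt (fun t : ℝ => d - t) (L v) (Set.Icc (0:ℝ) d) 0 := by
    refine (hcomp.hasDerivWithinAt).congr (fun t ht => (heq t ht).symm) ?_
    exact (heq 0 ⟨le_refl _, hd.le⟩).symm
  have h2 : HasDerivWithinAt (fun t : ℝ => d - t) (-1 : ℝ) (Set.Icc (0:ℝ) d) 0 :=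
    ((hasDerivAt_id (0:ℝ)).const_sub d).hasDerivWithinAt
  have hLv : L v = -1 := by
    have := h1.derivWithin hud
    rw [← this, h2.derivWithin hud]
  have hge : 1 ≤ ‖L‖ := by
    have : ‖L v‖ ≤ ‖L‖ * ‖v‖ := L.le_opNorm v
    rw [hLv, hvnorm, mul_one] at this
    simpa using this
  linarith

/-- (Eikonal equation) The signed distance function of a nonempty
proper subset `Ω` of a finite-dimensional real normed vector space has derivative of
operator norm exactly `1` at every point of differentiability away from the frontier. -/
theorem norm_fderiv_signedDist_eq_one {E : Type*} [NormedAddCommGroup E] [NormedSpace ℝ E]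
    [FiniteDimensional ℝ E] (Ω : Set E) (hne : Ω.Nonempty) (hproper : Ω ≠ Set.univ)
    (x : E) (hx : x ∉ frontier Ω)
    (hdiff : DifferentiableAt ℝ (signedDistFrontier Ω) x) :
    ‖fderiv ℝ (signedDistFrontier Ω) x‖ = 1 := by
  set F := frontier Ω with hF
  have hFc : IsClosed F := isClosed_frontier
  have hFne : F.Nonempty := by
    rw [Set.nonempty_iff_ne_empty]
    intro h
    rcases isClopen_iff.1 (isClopen_iff_frontier_eq_empty.2 h) with h' | h'
    · exact hne.ne_empty h'
    · exact hproper h'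
  have hd : 0 < infDist x F := (hFc.notMem_iff_infDist_pos hFne).1 hx
  set d := infDist x F with hdd
  -- the ball around x misses the frontier
  have hball : ball x d ∩ F = ∅ := by
    ext z
    simp only [Set.mem_inter_iff, mem_ball, Set.mem_empty_iff_false, iff_false, not_and]
    intro hz hzF
    have : d ≤ dist x z := infDist_le_dist_of_mem hzF
    rw [dist_comm] at this
    linarith
  -- ball is contained in interior Ω or in (closure Ω)ᶜ
  have hcover : ball x d ⊆ interior Ω ∪ (closure Ω)ᶜ := by
    intro z hz
    by_cases hzΩ : z ∈ interior Ω
    · exact Or.inl hzΩ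
    · refine Or.inr fun hzc => ?_
      have hzF : z ∈ F := ⟨hzc, hzΩ⟩
      have : z ∈ ball x d ∩ F := ⟨hz, hzF⟩
      rw [hball] at this
      exact this
  have hdisj : Disjoint (interior Ω) (closure Ω)ᶜ :=
    Set.disjoint_left.2 fun z hz hzc => hzc (interior_subset_closure hz)
  -- key: signedDist eventually equals ± infDist · F near x
  have hkey : ∃ c : ℝ, |c| = 1 ∧ signedDistFrontier Ω =ᶠ[nhds x] fun p => c * infDist p F := by
    by_cases hxΩ : x ∈ Ω
    · refine ⟨1, abs_one, ?_⟩
      have hxint : x ∈ interior Ω := by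
        rcases (Set.mem_union _ _ _).1 (hcover (mem_ball_self hd)) with h | h
        · exact h
        · exact absurd (subset_closure hxΩ) h
      have hsub : ball x d ⊆ interior Ω :=
        (convex_ball x d).isPreconnected.subset_left_of_subset_union isOpen_interior
          isClosed_closure.isOpen_compl hdisj hcover ⟨x, mem_ball_self hd, hxint⟩
      filter_upwards [ball_mem_nhds x hd] with z hz
      have : z ∈ Ω := interior_subset (hsub hz)
      simp [signedDistFrontier, this, hF]
    · refine ⟨-1, by norm_num, ?_⟩
      have hxc : x ∈ (closure Ω)ᶜ := by
        rcases (Set.mem_union _ _ _).1 (hcover (mem_ball_self hd)) with h | h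
        · exact absurd (interior_subset h) hxΩ
        · exact h
      have hsub : ball x d ⊆ (closure Ω)ᶜ := by
        refine (convex_ball x d).isPreconnected.subset_left_of_subset_union
          isClosed_closure.isOpen_compl isOpen_interior hdisj.symm ?_
          ⟨x, mem_ball_self hd, hxc⟩
        intro z hz; exact (hcover hz).symm
      filter_upwards [ball_mem_nhds x hd] with z hz
      have : z ∉ Ω := fun h => (hsub hz) (subset_closure h)
      simp [signedDistFrontier, this, hF]
  obtain ⟨c, hc, hcongr⟩ := hkey
  have hc0 : c ≠ 0 := by intro h; rw [h] at hc; simp at hc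
  have hgdiff : DifferentiableAt ℝ (fun p => infDist p F) x := by
    have h1 : DifferentiableAt ℝ (fun p => c * infDist p F) x :=
      hdiff.congr_of_eventuallyEq hcongr.symm
    have h2 : DifferentiableAt ℝ (fun p => c⁻¹ * (c * infDist p F)) x := h1.const_mul _
    refine h2.congr_of_eventuallyEq (Filter.Eventually.of_forall fun p => ?_)
    field_simp
  have hfd : fderiv ℝ (signedDistFrontier Ω) x = c • fderiv ℝ (fun p => infDist p F) x := by
    rw [hcongr.fderiv_eq]
    exact fderiv_const_mul hgdiff c
  rw [hfd, norm_smul, Real.norm_eq_abs, hc, one_mul]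
  exact norm_fderiv_infDist_eq_one F hFc hFne x hx hgdiff
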